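/- Let 1<p<∞ and let Φ be a Schwartz function on ℝ. There exists C>0 such that for every f ∈ L^p(0,∞): ‖ x ↦ ( ∫_0^∞ | (1/t) ∫_0^∞ Φ((x+y)/t) f(y) dy |² dt/t )^{1/2} ‖_{L^p(0,∞)} ≤ C ‖f‖_{L^p(0,∞)}. -/

import Mathlib

open MeasureTheory Real Set
open scoped ENNReal NNReal

noncomputable section

-- rpow integral over Ioi
lemma lint_Ioi_rpow {c a : ℝ} (hc : 0 < c) (ha : a < -1) :
    ∫⁻ t in Set.Ioi c, ENNReal.ofReal (t ^ a) = ENNReal.ofReal (c ^ (a + 1) / (-a - 1)) := by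
  rw [← ofReal_integral_eq_lintegral_ofReal (integrableOn_Ioi_rpow_of_lt ha hc)]
  · rw [integral_Ioi_rpow_of_lt ha hc]
    congr 1
    rw [neg_div, ← div_neg]
    ring_nf
  · filter_upwards [ae_restrict_mem measurableSet_Ioi] with t ht
    exact Real.rpow_nonneg (le_of_lt (lt_trans hc ht)) a

-- rpow integral over Ioc 0 x
lemma lint_Ioc_rpow {x a : ℝ} (hx : 0 < x) (ha : -1 < a) :
    ∫⁻ t in Set.Ioc 0 x, ENNReal.ofReal (t ^ a) = ENNReal.ofReal (x ^ (a + 1) / (a + 1)) := by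
  have hi : IntegrableOn (fun t : ℝ => t ^ a) (Set.Ioc 0 x) := by
    rw [← intervalIntegrable_iff_integrableOn_Ioc_of_le hx.le]
    exact intervalIntegral.intervalIntegrable_rpow' ha
  rw [← ofReal_integral_eq_lintegral_ofReal hi]
  · congr 1
    rw [← intervalIntegral.integral_of_le hx.le, integral_rpow (Or.inl ha)]
    rw [Real.zero_rpow (by linarith)]
    ring
  · filter_upwards [ae_restrict_mem measurableSet_Ioc] with t ht
    exact Real.rpow_nonneg ht.1.le a

-- Minkowski's integral inequality for L² (lintegral, exponent 2 via rpow)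
lemma minkowski_sq {α β : Type*} [MeasurableSpace α] [MeasurableSpace β] {μ : Measure α}
    {ν : Measure β} [SFinite μ] [SFinite ν] {g : α → β → ℝ≥0∞}
    (hg : Measurable (Function.uncurry g)) :
    (∫⁻ t, (∫⁻ y, g t y ∂ν) ^ (2:ℝ) ∂μ) ^ (1/2:ℝ) ≤
      ∫⁻ y, (∫⁻ t, g t y ^ (2:ℝ) ∂μ) ^ (1/2:ℝ) ∂ν := by
  have h22 : Real.HolderConjugate 2 2 := Real.HolderConjugate.two_two
  have hsec : ∀ t, Measurable (g t) := fun t =>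
    hg.comp (measurable_prodMk_left)
  have hsec' : ∀ y, Measurable (fun t => g t y) := fun y =>
    hg.comp (measurable_prodMk_right)
  set h : β → ℝ≥0∞ := fun y => (∫⁻ t, g t y ^ (2:ℝ) ∂μ) ^ (1/2:ℝ) with hh
  have hmeas_h : Measurable h := by
    apply Measurable.pow_const
    exact Measurable.lintegral_prod_left (hg.pow_const _)
  have key : ∫⁻ t, (∫⁻ y, g t y ∂ν) ^ (2:ℝ) ∂μ ≤ (∫⁻ y, h y ∂ν) ^ (2:ℝ) := by
    have e1 : ∀ t, (∫⁻ y, g t y ∂ν) ^ (2:ℝ) = ∫⁻ p, g t p.1 * g t p.2 ∂(ν.prod ν) := by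
      intro t
      rw [lintegral_prod_mul (hsec t).aemeasurable (hsec t).aemeasurable]
      rw [show (2:ℝ) = ((2:ℕ):ℝ) by norm_num, ENNReal.rpow_natCast, sq]
    calc ∫⁻ t, (∫⁻ y, g t y ∂ν) ^ (2:ℝ) ∂μ
        = ∫⁻ t, ∫⁻ p, g t p.1 * g t p.2 ∂(ν.prod ν) ∂μ := by simp_rw [e1]
      _ = ∫⁻ p, ∫⁻ t, g t p.1 * g t p.2 ∂μ ∂(ν.prod ν) := by
          apply lintegral_lintegral_swap
          apply Measurable.aemeasurable
          have m1 : Measurable fun q : α × β × β => g q.1 q.2.1 :=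
            hg.comp (measurable_fst.prodMk (measurable_fst.comp measurable_snd))
          have m2 : Measurable fun q : α × β × β => g q.1 q.2.2 :=
            hg.comp (measurable_fst.prodMk (measurable_snd.comp measurable_snd))
          exact m1.mul m2
      _ ≤ ∫⁻ p, h p.1 * h p.2 ∂(ν.prod ν) := by
          apply lintegral_mono
          intro p
          have := ENNReal.lintegral_mul_le_Lp_mul_Lq μ h22
            (hsec' p.1).aemeasurable (hsec' p.2).aemeasurable
          simpa [hh, one_div] using this
      _ = (∫⁻ y, h y ∂ν) ^ (2:ℝ) := by
          rw [lintegral_prod_mul hmeas_h.aemeasurable hmeas_h.aemeasurable]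
          rw [show (2:ℝ) = ((2:ℕ):ℝ) by norm_num, ENNReal.rpow_natCast, sq]
  calc (∫⁻ t, (∫⁻ y, g t y ∂ν) ^ (2:ℝ) ∂μ) ^ (1/2:ℝ)
      ≤ ((∫⁻ y, h y ∂ν) ^ (2:ℝ)) ^ (1/2:ℝ) :=
        ENNReal.rpow_le_rpow key (by norm_num)
    _ = ∫⁻ y, h y ∂ν := by
        rw [← ENNReal.rpow_mul]
        norm_num

lemma Ioi_split (x : ℝ) (hx : 0 < x) : Set.Ioi (0:ℝ) = Set.Ioc 0 x ∪ Set.Ioi x := by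
  rw [Set.Ioc_union_Ioi_eq_Ioi hx.le]

lemma schur_aux {a x : ℝ} (ha0 : 0 < a) (ha1 : a < 1) (hx : 0 < x) :
    ∫⁻ y in Set.Ioi (0:ℝ), ENNReal.ofReal (1/(x+y)) * ENNReal.ofReal (y ^ (-a)) ≤
      ENNReal.ofReal (1/(1-a) + 1/a) * ENNReal.ofReal (x ^ (-a)) := by
  rw [Ioi_split x hx, lintegral_union measurableSet_Ioi
    (Set.Ioc_disjoint_Ioi le_rfl)]
  have h1 : ∫⁻ y in Set.Ioc (0:ℝ) x, ENNReal.ofReal (1/(x+y)) * ENNReal.ofReal (y ^ (-a)) ≤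
      ENNReal.ofReal (x ^ (-a) / (1-a)) := by
    have hb : ∀ᵐ y ∂(volume.restrict (Set.Ioc (0:ℝ) x)),
        ENNReal.ofReal (1/(x+y)) * ENNReal.ofReal (y ^ (-a)) ≤
        ENNReal.ofReal (1/x) * ENNReal.ofReal (y ^ (-a)) := by
      filter_upwards [ae_restrict_mem measurableSet_Ioc] with y hy
      apply mul_le_mul_left
      apply ENNReal.ofReal_le_ofReal
      apply one_div_le_one_div_of_le hx (by linarith [hy.1])
    calc ∫⁻ y in Set.Ioc (0:ℝ) x, ENNReal.ofReal (1/(x+y)) * ENNReal.ofReal (y ^ (-a))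
        ≤ ∫⁻ y in Set.Ioc (0:ℝ) x, ENNReal.ofReal (1/x) * ENNReal.ofReal (y ^ (-a)) :=
          lintegral_mono_ae hb
      _ = ENNReal.ofReal (1/x) * ∫⁻ y in Set.Ioc (0:ℝ) x, ENNReal.ofReal (y ^ (-a)) :=
          lintegral_const_mul' _ _ ENNReal.ofReal_ne_top
      _ = ENNReal.ofReal (1/x) * ENNReal.ofReal (x ^ (-a + 1) / (-a + 1)) := by
          rw [lint_Ioc_rpow hx (by linarith)]
      _ = ENNReal.ofReal (x ^ (-a) / (1-a)) := by
          rw [← ENNReal.ofReal_mul (by positivity)]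
          congr 1
          rw [Real.rpow_add hx, Real.rpow_one]
          field_simp
          ring
  have h2 : ∫⁻ y in Set.Ioi x, ENNReal.ofReal (1/(x+y)) * ENNReal.ofReal (y ^ (-a)) ≤
      ENNReal.ofReal (x ^ (-a) / a) := by
    have hb : ∀ᵐ y ∂(volume.restrict (Set.Ioi x)),
        ENNReal.ofReal (1/(x+y)) * ENNReal.ofReal (y ^ (-a)) ≤
        ENNReal.ofReal (y ^ (-1-a)) := by
      filter_upwards [ae_restrict_mem measurableSet_Ioi] with y hy
      have hy0 : 0 < y := hx.trans hy
      rw [← ENNReal.ofReal_mul (by positivity)]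
      apply ENNReal.ofReal_le_ofReal
      have : (1:ℝ)/(x+y) ≤ 1/y := one_div_le_one_div_of_le hy0 (by linarith)
      calc 1/(x+y) * y ^ (-a) ≤ 1/y * y ^ (-a) := by
            apply mul_le_mul_of_nonneg_right this (Real.rpow_nonneg hy0.le _)
        _ = y ^ (-1-a) := by
            rw [show (-1-a : ℝ) = (-1) + (-a) by ring, Real.rpow_add hy0,
              Real.rpow_neg_one]
            rw [one_div]
    calc ∫⁻ y in Set.Ioi x, ENNReal.ofReal (1/(x+y)) * ENNReal.ofReal (y ^ (-a))
        ≤ ∫⁻ y in Set.Ioi x, ENNReal.ofReal (y ^ (-1-a)) := lintegral_mono_ae hb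
      _ = ENNReal.ofReal (x ^ (-1-a+1) / (-(-1-a) - 1)) := lint_Ioi_rpow hx (by linarith)
      _ = ENNReal.ofReal (x ^ (-a) / a) := by
          rw [show (-1-a+1:ℝ) = -a by ring]
          norm_num
  calc _ ≤ ENNReal.ofReal (x ^ (-a) / (1-a)) + ENNReal.ofReal (x ^ (-a) / a) :=
        add_le_add h1 h2
    _ = ENNReal.ofReal (1/(1-a) + 1/a) * ENNReal.ofReal (x ^ (-a)) := by
        have h1a : (0:ℝ) < 1 - a := by linarith
        rw [← ENNReal.ofReal_add (by positivity) (by positivity),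
          ← ENNReal.ofReal_mul (by positivity)]
        congr 1
        field_simp

lemma schur_test {p : ℝ} (hp : 1 < p) :
    ∃ Cp : ℝ, 0 < Cp ∧ ∀ F : ℝ → ℝ≥0∞, Measurable F → (∀ y, F y ≠ ∞) →
      ∫⁻ x in Set.Ioi (0:ℝ), (∫⁻ y in Set.Ioi (0:ℝ), ENNReal.ofReal (1/(x+y)) * F y) ^ p ≤
        ENNReal.ofReal Cp * ∫⁻ y in Set.Ioi (0:ℝ), F y ^ p := by
  set q := Real.conjExponent p with hq
  have hpq : p.HolderConjugate q := Real.HolderConjugate.conjExponent hp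
  have hq1 : 1 < q := hpq.symm.lt
  set a := 1/p with ha
  set b := 1/q with hb
  have hab : a + b = 1 := by
    rw [ha, hb, one_div, one_div]; exact hpq.inv_add_inv_eq_one
  have ha0 : 0 < a := by positivity
  have hb0 : 0 < b := hpq.symm.one_div_pos
  have ha1 : a < 1 := by linarith
  have hb1 : b < 1 := by linarith
  set c1 : ℝ := 1/(1-a) + 1/a with hc1
  set c2 : ℝ := 1/(1-b) + 1/b with hc2
  have hc10 : 0 < c1 := by
    have : (0:ℝ) < 1 - a := by linarith
    positivity
  have hc20 : 0 < c2 := by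
    have : (0:ℝ) < 1 - b := by linarith
    positivity
  refine ⟨c1 ^ (p/q) * c2, by positivity, ?_⟩
  intro F hF hF'
  set ν := volume.restrict (Set.Ioi (0:ℝ)) with hν
  -- measurability helpers
  have hKm : Measurable (Function.uncurry fun x y : ℝ => ENNReal.ofReal (1/(x+y))) := by
    apply ENNReal.measurable_ofReal.comp
    apply Measurable.div measurable_const
    exact (measurable_fst.add measurable_snd)
  have hrpm : ∀ c : ℝ, Measurable fun y : ℝ => ENNReal.ofReal (y ^ c) := by
    intro c
    exact ENNReal.measurable_ofReal.comp (measurable_id.pow_const c)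
  -- pointwise (in x) Hölder + schur_aux
  have step1 : ∀ x : ℝ, 0 < x →
      (∫⁻ y in Set.Ioi (0:ℝ), ENNReal.ofReal (1/(x+y)) * F y) ^ p ≤
        (ENNReal.ofReal c1) ^ (p/q) * (ENNReal.ofReal (x ^ (-b)) *
          ∫⁻ y in Set.Ioi (0:ℝ), ENNReal.ofReal (1/(x+y)) *
            (ENNReal.ofReal (y ^ b) * F y ^ p)) := by
    intro x hx
    set K : ℝ → ℝ≥0∞ := fun y => ENNReal.ofReal (1/(x+y)) with hK
    set f1 : ℝ → ℝ≥0∞ := fun y => K y ^ (1/q) * ENNReal.ofReal (y ^ (-(a*b))) with hf1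
    set f2 : ℝ → ℝ≥0∞ := fun y => K y ^ (1/p) * ENNReal.ofReal (y ^ (a*b)) * F y with hf2
    have hKy : ∀ y : ℝ, 0 < y → (K y ≠ 0 ∧ K y ≠ ∞) := by
      intro y hy
      constructor
      · simp only [hK, ne_eq, ENNReal.ofReal_eq_zero, not_le]
        positivity
      · exact ENNReal.ofReal_ne_top
    have hprod : ∀ᵐ y ∂ν, f2 y * f1 y = K y * F y := by
      filter_upwards [ae_restrict_mem measurableSet_Ioi] with y hy
      have hy0 : (0:ℝ) < y := hy
      have e1 : K y ^ (1/p) * K y ^ (1/q) = K y := by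
        rw [← ENNReal.rpow_add _ _ (hKy y hy0).1 (hKy y hy0).2, ← ha, ← hb, hab,
          ENNReal.rpow_one]
      have e2 : ENNReal.ofReal (y ^ (a*b)) * ENNReal.ofReal (y ^ (-(a*b))) = 1 := by
        rw [← ENNReal.ofReal_mul (Real.rpow_nonneg hy0.le _),
          ← Real.rpow_add hy0]
        norm_num
      calc f2 y * f1 y
          = (K y ^ (1/p) * K y ^ (1/q)) *
            ((ENNReal.ofReal (y ^ (a*b)) * ENNReal.ofReal (y ^ (-(a*b)))) * F y) := by
            simp only [hf1, hf2]; ring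
        _ = K y * F y := by rw [e1, e2, one_mul]
    have hf1m : Measurable f1 := by
      apply Measurable.mul
      · exact ((hKm.comp measurable_prodMk_left).pow_const _)
      · exact hrpm _
    have hf2m : Measurable f2 := by
      apply Measurable.mul
      apply Measurable.mul
      · exact ((hKm.comp measurable_prodMk_left).pow_const _)
      · exact hrpm _
      · exact hF
    have holder := ENNReal.lintegral_mul_le_Lp_mul_Lq ν hpq
      hf2m.aemeasurable hf1m.aemeasurable
    have key : ∫⁻ y in Set.Ioi (0:ℝ), K y * F y ≤
        (∫⁻ y, f2 y ^ p ∂ν) ^ (1/p) * (∫⁻ y, f1 y ^ q ∂ν) ^ (1/q) := by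
      rw [← hν, ← lintegral_congr_ae hprod]
      exact holder
    -- compute/bound ∫ f1^q
    have hf1q : ∫⁻ y, f1 y ^ q ∂ν ≤ ENNReal.ofReal c1 * ENNReal.ofReal (x ^ (-a)) := by
      have e : ∀ᵐ y ∂ν, f1 y ^ q = K y * ENNReal.ofReal (y ^ (-a)) := by
        filter_upwards [ae_restrict_mem measurableSet_Ioi] with y hy
        have hy0 : (0:ℝ) < y := hy
        rw [hf1]
        rw [ENNReal.mul_rpow_of_nonneg _ _ (by positivity : (0:ℝ) ≤ q)]
        congr 1
        · rw [← ENNReal.rpow_mul, one_div, inv_mul_cancel₀ (by positivity : q ≠ 0),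
            ENNReal.rpow_one]
        · rw [ENNReal.ofReal_rpow_of_nonneg (Real.rpow_nonneg hy0.le _) (by positivity),
            ← Real.rpow_mul hy0.le]
          congr 2
          have hbq : b * q = 1 := by rw [hb]; field_simp
          calc -(a*b) * q = -(a * (b*q)) := by ring
            _ = -a := by rw [hbq, mul_one]
      rw [lintegral_congr_ae e]
      exact schur_aux ha0 ha1 hx
    -- compute ∫ f2^p
    have hf2p : ∫⁻ y, f2 y ^ p ∂ν =
        ∫⁻ y in Set.Ioi (0:ℝ), K y * (ENNReal.ofReal (y ^ b) * F y ^ p) := by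
      rw [hν]
      apply lintegral_congr_ae
      filter_upwards [ae_restrict_mem measurableSet_Ioi] with y hy
      have hy0 : (0:ℝ) < y := hy
      rw [hf2]
      rw [ENNReal.mul_rpow_of_nonneg _ _ (by positivity : (0:ℝ) ≤ p),
        ENNReal.mul_rpow_of_nonneg _ _ (by positivity : (0:ℝ) ≤ p)]
      rw [← ENNReal.rpow_mul, one_div, inv_mul_cancel₀ (by positivity : p ≠ 0),
        ENNReal.rpow_one]
      rw [ENNReal.ofReal_rpow_of_nonneg (Real.rpow_nonneg hy0.le _) (by positivity),
        ← Real.rpow_mul hy0.le]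
      have hap : a * b * p = b := by
        rw [ha]; field_simp
      rw [hap, mul_assoc]
    -- combine
    have hTF : (∫⁻ y in Set.Ioi (0:ℝ), ENNReal.ofReal (1/(x+y)) * F y) ^ p ≤
        ((∫⁻ y, f2 y ^ p ∂ν) ^ (1/p) * (∫⁻ y, f1 y ^ q ∂ν) ^ (1/q)) ^ p :=
      ENNReal.rpow_le_rpow key (by positivity)
    refine hTF.trans ?_
    have hc1b : ((∫⁻ y, f1 y ^ q ∂ν) ^ (1/q)) ^ p ≤
        (ENNReal.ofReal c1) ^ (p/q) * ENNReal.ofReal (x ^ (-b)) := by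
      calc ((∫⁻ y, f1 y ^ q ∂ν) ^ (1/q)) ^ p
          ≤ ((ENNReal.ofReal c1 * ENNReal.ofReal (x ^ (-a))) ^ (1/q)) ^ p := by
            apply ENNReal.rpow_le_rpow _ (by positivity)
            exact ENNReal.rpow_le_rpow hf1q (by positivity)
        _ = (ENNReal.ofReal c1) ^ (p/q) * (ENNReal.ofReal (x ^ (-a))) ^ (p/q) := by
            rw [← ENNReal.rpow_mul, ENNReal.mul_rpow_of_nonneg _ _
              (by positivity : (0:ℝ) ≤ 1/q * p), show (1/q*p : ℝ) = p/q by ring]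
        _ = (ENNReal.ofReal c1) ^ (p/q) * ENNReal.ofReal (x ^ (-b)) := by
            congr 1
            rw [ENNReal.ofReal_rpow_of_nonneg (Real.rpow_nonneg hx.le _) (by positivity),
              ← Real.rpow_mul hx.le]
            congr 1
            rw [ha, hb]
            field_simp
    calc ((∫⁻ y, f2 y ^ p ∂ν) ^ (1/p) * (∫⁻ y, f1 y ^ q ∂ν) ^ (1/q)) ^ p
        = (∫⁻ y, f2 y ^ p ∂ν) * ((∫⁻ y, f1 y ^ q ∂ν) ^ (1/q)) ^ p := by
          rw [ENNReal.mul_rpow_of_nonneg _ _ (by positivity : (0:ℝ) ≤ p),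
            ← ENNReal.rpow_mul, one_div, inv_mul_cancel₀ (by positivity : p ≠ 0),
            ENNReal.rpow_one]
      _ ≤ (∫⁻ y, f2 y ^ p ∂ν) * ((ENNReal.ofReal c1) ^ (p/q) * ENNReal.ofReal (x ^ (-b))) :=
          mul_le_mul' le_rfl hc1b
      _ = (ENNReal.ofReal c1) ^ (p/q) * (ENNReal.ofReal (x ^ (-b)) * ∫⁻ y, f2 y ^ p ∂ν) := by
          ring
      _ = (ENNReal.ofReal c1) ^ (p/q) * (ENNReal.ofReal (x ^ (-b)) *
            ∫⁻ y in Set.Ioi (0:ℝ), ENNReal.ofReal (1/(x+y)) *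
              (ENNReal.ofReal (y ^ b) * F y ^ p)) := by
          rw [hf2p]
  -- now integrate in x
  have hJm : Measurable (Function.uncurry fun x y : ℝ =>
      ENNReal.ofReal (x ^ (-b)) * (ENNReal.ofReal (1/(x+y)) *
        (ENNReal.ofReal (y ^ b) * F y ^ p))) := by
    apply Measurable.mul
    · exact ((hrpm (-b)).comp measurable_fst)
    apply Measurable.mul
    · exact hKm
    apply Measurable.mul
    · exact ((hrpm b).comp measurable_snd)
    · exact ((hF.pow_const p).comp measurable_snd)
  have hfin : ∀ y : ℝ, ENNReal.ofReal (y ^ b) * F y ^ p ≠ ∞ :=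
    fun y => ENNReal.mul_ne_top ENNReal.ofReal_ne_top
      (ENNReal.rpow_ne_top_of_nonneg (by positivity) (hF' y))
  calc ∫⁻ x in Set.Ioi (0:ℝ), (∫⁻ y in Set.Ioi (0:ℝ), ENNReal.ofReal (1/(x+y)) * F y) ^ p
      ≤ ∫⁻ x in Set.Ioi (0:ℝ), (ENNReal.ofReal c1) ^ (p/q) *
          (ENNReal.ofReal (x ^ (-b)) * ∫⁻ y in Set.Ioi (0:ℝ), ENNReal.ofReal (1/(x+y)) *
            (ENNReal.ofReal (y ^ b) * F y ^ p)) := by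
        apply lintegral_mono_ae
        filter_upwards [ae_restrict_mem measurableSet_Ioi] with x hx
        exact step1 x hx
    _ = (ENNReal.ofReal c1) ^ (p/q) * ∫⁻ x in Set.Ioi (0:ℝ),
          ∫⁻ y in Set.Ioi (0:ℝ), ENNReal.ofReal (x ^ (-b)) * (ENNReal.ofReal (1/(x+y)) *
            (ENNReal.ofReal (y ^ b) * F y ^ p)) := by
        rw [lintegral_const_mul' _ _
          (ENNReal.rpow_ne_top_of_nonneg (by positivity) ENNReal.ofReal_ne_top)]
        congr 1
        apply lintegral_congr
        intro x
        exact (lintegral_const_mul' _ _ ENNReal.ofReal_ne_top).symm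
    _ = (ENNReal.ofReal c1) ^ (p/q) * ∫⁻ y in Set.Ioi (0:ℝ),
          ∫⁻ x in Set.Ioi (0:ℝ), ENNReal.ofReal (x ^ (-b)) * (ENNReal.ofReal (1/(x+y)) *
            (ENNReal.ofReal (y ^ b) * F y ^ p)) := by
        congr 1
        exact lintegral_lintegral_swap hJm.aemeasurable
    _ ≤ (ENNReal.ofReal c1) ^ (p/q) * ∫⁻ y in Set.Ioi (0:ℝ),
          (ENNReal.ofReal (y ^ b) * F y ^ p) * (ENNReal.ofReal c2 * ENNReal.ofReal (y ^ (-b))) := by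
        apply mul_le_mul' le_rfl
        apply lintegral_mono_ae
        filter_upwards [ae_restrict_mem measurableSet_Ioi] with y hy
        have hy0 : (0:ℝ) < y := hy
        have e : ∀ x : ℝ, ENNReal.ofReal (x ^ (-b)) * (ENNReal.ofReal (1/(x+y)) *
            (ENNReal.ofReal (y ^ b) * F y ^ p)) =
            (ENNReal.ofReal (y ^ b) * F y ^ p) *
              (ENNReal.ofReal (1/(y+x)) * ENNReal.ofReal (x ^ (-b))) := by
          intro x
          rw [add_comm y x]
          ring
        simp_rw [e]
        rw [lintegral_const_mul' _ _ (hfin y)]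
        exact mul_le_mul' le_rfl (schur_aux hb0 hb1 hy0)
    _ = (ENNReal.ofReal c1) ^ (p/q) * (ENNReal.ofReal c2 * ∫⁻ y in Set.Ioi (0:ℝ), F y ^ p) := by
        congr 1
        rw [← lintegral_const_mul' _ _ ENNReal.ofReal_ne_top]
        apply lintegral_congr_ae
        filter_upwards [ae_restrict_mem measurableSet_Ioi] with y hy
        have hy0 : (0:ℝ) < y := hy
        have e2 : ENNReal.ofReal (y ^ b) * ENNReal.ofReal (y ^ (-b)) = 1 := by
          rw [← ENNReal.ofReal_mul (Real.rpow_nonneg hy0.le _), ← Real.rpow_add hy0]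
          norm_num
        calc ENNReal.ofReal (y ^ b) * F y ^ p * (ENNReal.ofReal c2 * ENNReal.ofReal (y ^ (-b)))
            = ENNReal.ofReal c2 * ((ENNReal.ofReal (y ^ b) * ENNReal.ofReal (y ^ (-b))) * F y ^ p) := by
              ring
          _ = ENNReal.ofReal c2 * F y ^ p := by rw [e2, one_mul]
    _ = ENNReal.ofReal (c1 ^ (p/q) * c2) * ∫⁻ y in Set.Ioi (0:ℝ), F y ^ p := by
        rw [ENNReal.ofReal_mul (by positivity),
          ← ENNReal.ofReal_rpow_of_nonneg hc10.le (by positivity), mul_assoc]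

lemma kernel_bound (Φ : SchwartzMap ℝ ℂ) : ∃ E : ℝ, 0 < E ∧ ∀ s : ℝ, 0 < s →
    ∫⁻ t in Set.Ioi (0:ℝ), ENNReal.ofReal ((t ^ (-(3:ℝ)/2) * ‖Φ (s/t)‖)^2) ≤
      ENNReal.ofReal (E * (1/s)^2) := by
  obtain ⟨C0, hC0⟩ := Φ.decay 0 0
  obtain ⟨C2, hC2⟩ := Φ.decay 2 0
  have hC0' : ∀ x : ℝ, ‖Φ x‖ ≤ C0 := by
    intro x
    have := hC0.2 x
    simpa [norm_iteratedFDeriv_zero] using this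
  have hC2' : ∀ x : ℝ, ‖x‖^2 * ‖Φ x‖ ≤ C2 := by
    intro x
    have := hC2.2 x
    simpa [norm_iteratedFDeriv_zero] using this
  have hC0pos : 0 ≤ C0 := hC0.1.le
  have hC2pos : 0 ≤ C2 := hC2.1.le
  refine ⟨(C0^2 + C2^2)/2 + 1, by positivity, ?_⟩
  intro s hs
  rw [Ioi_split s hs, lintegral_union measurableSet_Ioi (Set.Ioc_disjoint_Ioi le_rfl)]
  have h1 : ∫⁻ t in Set.Ioc (0:ℝ) s, ENNReal.ofReal ((t ^ (-(3:ℝ)/2) * ‖Φ (s/t)‖)^2) ≤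
      ENNReal.ofReal (C2^2/2 * (1/s)^2) := by
    have hb : ∀ᵐ t ∂(volume.restrict (Set.Ioc (0:ℝ) s)),
        ENNReal.ofReal ((t ^ (-(3:ℝ)/2) * ‖Φ (s/t)‖)^2) ≤
          ENNReal.ofReal ((C2/s^2)^2) * ENNReal.ofReal (t ^ (1:ℝ)) := by
      filter_upwards [ae_restrict_mem measurableSet_Ioc] with t ht
      have ht0 : (0:ℝ) < t := ht.1
      have hst : (0:ℝ) < s/t := by positivity
      have hφ : ‖Φ (s/t)‖ ≤ C2 * t^2 / s^2 := by
        have h := hC2' (s/t)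
        have hn : ‖(s/t : ℝ)‖ = s/t := abs_of_pos hst
        rw [hn] at h
        rw [div_pow] at h
        have hs2 : (0:ℝ) < s^2 := by positivity
        have ht2 : (0:ℝ) < t^2 := by positivity
        calc ‖Φ (s/t)‖ = (s^2/t^2 * ‖Φ (s/t)‖) * (t^2/s^2) := by field_simp
          _ ≤ C2 * (t^2/s^2) := by
              apply mul_le_mul_of_nonneg_right h (by positivity)
          _ = C2 * t^2 / s^2 := by ring
      have hkey : t ^ (-(3:ℝ)/2) * ‖Φ (s/t)‖ ≤ C2/s^2 * t ^ (1/2:ℝ) := by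
        calc t ^ (-(3:ℝ)/2) * ‖Φ (s/t)‖ ≤ t ^ (-(3:ℝ)/2) * (C2 * t^2 / s^2) := by
              apply mul_le_mul_of_nonneg_left hφ (Real.rpow_nonneg ht0.le _)
          _ = C2/s^2 * (t ^ (-(3:ℝ)/2) * t ^ (2:ℝ)) := by
              rw [show (2:ℝ) = ((2:ℕ):ℝ) by norm_num, Real.rpow_natCast]
              ring
          _ = C2/s^2 * t ^ (1/2:ℝ) := by
              rw [← Real.rpow_add ht0]
              norm_num
      have hsq : (t ^ (-(3:ℝ)/2) * ‖Φ (s/t)‖)^2 ≤ (C2/s^2)^2 * t ^ (1:ℝ) := by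
        have h2 : (t ^ (-(3:ℝ)/2) * ‖Φ (s/t)‖)^2 ≤ (C2/s^2 * t ^ (1/2:ℝ))^2 := by
          apply pow_le_pow_left₀ (by positivity) hkey
        refine h2.trans_eq ?_
        rw [mul_pow, ← Real.rpow_natCast (t ^ ((1:ℝ)/2)) 2, ← Real.rpow_mul ht0.le]
        norm_num
      rw [← ENNReal.ofReal_mul (by positivity)]
      exact ENNReal.ofReal_le_ofReal hsq
    calc ∫⁻ t in Set.Ioc (0:ℝ) s, ENNReal.ofReal ((t ^ (-(3:ℝ)/2) * ‖Φ (s/t)‖)^2)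
        ≤ ∫⁻ t in Set.Ioc (0:ℝ) s, ENNReal.ofReal ((C2/s^2)^2) * ENNReal.ofReal (t ^ (1:ℝ)) :=
          lintegral_mono_ae hb
      _ = ENNReal.ofReal ((C2/s^2)^2) * ENNReal.ofReal (s ^ (1+1:ℝ) / (1+1)) := by
          rw [lintegral_const_mul' _ _ ENNReal.ofReal_ne_top, lint_Ioc_rpow hs (by norm_num)]
      _ = ENNReal.ofReal (C2^2/2 * (1/s)^2) := by
          rw [← ENNReal.ofReal_mul (by positivity)]
          congr 1
          rw [show (1+1:ℝ) = ((2:ℕ):ℝ) by norm_num, Real.rpow_natCast]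
          field_simp
          ring
  have h2 : ∫⁻ t in Set.Ioi s, ENNReal.ofReal ((t ^ (-(3:ℝ)/2) * ‖Φ (s/t)‖)^2) ≤
      ENNReal.ofReal (C0^2/2 * (1/s)^2) := by
    have hb : ∀ᵐ t ∂(volume.restrict (Set.Ioi s)),
        ENNReal.ofReal ((t ^ (-(3:ℝ)/2) * ‖Φ (s/t)‖)^2) ≤
          ENNReal.ofReal (C0^2) * ENNReal.ofReal (t ^ (-3:ℝ)) := by
      filter_upwards [ae_restrict_mem measurableSet_Ioi] with t ht
      have ht0 : (0:ℝ) < t := hs.trans ht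
      have hkey : (t ^ (-(3:ℝ)/2) * ‖Φ (s/t)‖)^2 ≤ C0^2 * t ^ (-3:ℝ) := by
        have h2' : (t ^ (-(3:ℝ)/2) * ‖Φ (s/t)‖)^2 ≤ (t ^ (-(3:ℝ)/2) * C0)^2 := by
          apply pow_le_pow_left₀ (by positivity) 
          apply mul_le_mul_of_nonneg_left (hC0' _) (Real.rpow_nonneg ht0.le _)
        refine h2'.trans_eq ?_
        rw [mul_pow, ← Real.rpow_natCast (t ^ (-(3:ℝ)/2)) 2, ← Real.rpow_mul ht0.le]
        norm_num
        ring
      rw [← ENNReal.ofReal_mul (by positivity)]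
      exact ENNReal.ofReal_le_ofReal hkey
    calc ∫⁻ t in Set.Ioi s, ENNReal.ofReal ((t ^ (-(3:ℝ)/2) * ‖Φ (s/t)‖)^2)
        ≤ ∫⁻ t in Set.Ioi s, ENNReal.ofReal (C0^2) * ENNReal.ofReal (t ^ (-3:ℝ)) :=
          lintegral_mono_ae hb
      _ = ENNReal.ofReal (C0^2) * ENNReal.ofReal (s ^ (-3+1:ℝ) / (-(-3:ℝ)-1)) := by
          rw [lintegral_const_mul' _ _ ENNReal.ofReal_ne_top,
            lint_Ioi_rpow hs (by norm_num)]
      _ = ENNReal.ofReal (C0^2/2 * (1/s)^2) := by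
          rw [← ENNReal.ofReal_mul (by positivity)]
          congr 1
          rw [show (-3+1:ℝ) = -(((2:ℕ):ℝ)) by norm_num, Real.rpow_neg hs.le,
            Real.rpow_natCast]
          norm_num
          ring
  calc _ ≤ ENNReal.ofReal (C2^2/2 * (1/s)^2) + ENNReal.ofReal (C0^2/2 * (1/s)^2) :=
        add_le_add h1 h2
    _ ≤ ENNReal.ofReal (((C0^2 + C2^2)/2 + 1) * (1/s)^2) := by
        rw [← ENNReal.ofReal_add (by positivity) (by positivity)]
        apply ENNReal.ofReal_le_ofReal
        have h1s : (0:ℝ) ≤ (1/s)^2 := by positivity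
        nlinarith

lemma pointwise_bound (Φ : SchwartzMap ℝ ℂ) {E : ℝ} (hE : 0 < E)
    (hker : ∀ s : ℝ, 0 < s → ∫⁻ t in Set.Ioi (0:ℝ),
      ENNReal.ofReal ((t ^ (-(3:ℝ)/2) * ‖Φ (s/t)‖)^2) ≤ ENNReal.ofReal (E * (1/s)^2))
    (g : ℝ → ℂ) (hg : StronglyMeasurable g) {x : ℝ} (hx : 0 < x) :
    ENNReal.ofReal (Real.sqrt (∫ t in Set.Ioi (0:ℝ),
        ‖(1/(t:ℂ)) * ∫ y in Set.Ioi (0:ℝ), Φ ((x + y)/t) * g y‖^2 / t)) ≤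
      ENNReal.ofReal (Real.sqrt E) *
        ∫⁻ y in Set.Ioi (0:ℝ), ENNReal.ofReal (1/(x+y)) * (‖g y‖₊ : ℝ≥0∞) := by
  set ν := volume.restrict (Set.Ioi (0:ℝ)) with hν
  set I : ℝ → ℂ := fun t => ∫ y in Set.Ioi (0:ℝ), Φ ((x + y)/t) * g y with hI
  set w : ℝ → ℝ := fun t => ‖(1/(t:ℂ)) * I t‖^2 / t with hw
  set g2 : ℝ → ℝ → ℝ≥0∞ := fun t y =>
    ENNReal.ofReal (t ^ (-(3:ℝ)/2) * ‖Φ ((x+y)/t)‖) * (‖g y‖₊ : ℝ≥0∞) with hg2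
  have hwnn : ∀ t ∈ Set.Ioi (0:ℝ), 0 ≤ w t := by
    intro t ht
    have : (0:ℝ) < t := ht
    positivity
  have hr : 0 ≤ ∫ t in Set.Ioi (0:ℝ), w t :=
    setIntegral_nonneg measurableSet_Ioi hwnn
  -- step b
  rw [Real.sqrt_eq_rpow, ← ENNReal.ofReal_rpow_of_nonneg hr (by norm_num)]
  -- step c : ofReal r ≤ lintegral
  have hc : ENNReal.ofReal (∫ t in Set.Ioi (0:ℝ), w t) ≤ ∫⁻ t, ENNReal.ofReal (w t) ∂ν := by
    by_cases hint : Integrable w ν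
    · rw [ofReal_integral_eq_lintegral_ofReal hint ?_]
      filter_upwards [ae_restrict_mem measurableSet_Ioi] with t ht
      exact hwnn t ht
    · rw [integral_undef hint]
      simp
  -- step d : pointwise bound on ofReal (w t)
  have hd : ∀ᵐ t ∂ν, ENNReal.ofReal (w t) ≤ (∫⁻ y, g2 t y ∂ν) ^ (2:ℝ) := by
    filter_upwards [ae_restrict_mem measurableSet_Ioi] with t ht
    have ht0 : (0:ℝ) < t := ht
    have hnorm : ‖(1/(t:ℂ)) * I t‖ = (1/t) * ‖I t‖ := by
      rw [norm_mul, norm_div, norm_one, Complex.norm_real]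
      rw [Real.norm_eq_abs, abs_of_pos ht0]
    have h32 : (t ^ (-(3:ℝ)/2))^2 = (t^3)⁻¹ := by
      rw [← Real.rpow_natCast (t ^ (-(3:ℝ)/2)) 2, ← Real.rpow_mul ht0.le,
        show (-(3:ℝ)/2 * ((2:ℕ):ℝ) : ℝ) = -((3:ℕ):ℝ) by push_cast; ring,
        Real.rpow_neg ht0.le, Real.rpow_natCast]
    have claim1 : w t = (t ^ (-(3:ℝ)/2) * ‖I t‖)^2 := by
      rw [hw]
      simp only
      rw [hnorm, mul_pow, mul_pow, h32, div_eq_mul_inv, one_div, inv_pow]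
      ring
    have claim2 : ENNReal.ofReal (w t) =
        (ENNReal.ofReal (t ^ (-(3:ℝ)/2)) * (‖I t‖₊ : ℝ≥0∞)) ^ (2:ℝ) := by
      rw [claim1]
      rw [← enorm_eq_nnnorm, ← ofReal_norm,
        ← ENNReal.ofReal_mul (Real.rpow_nonneg ht0.le _)]
      rw [ENNReal.ofReal_rpow_of_nonneg (by positivity) (by norm_num)]
      congr 1
      rw [show (2:ℝ) = ((2:ℕ):ℝ) by norm_num, Real.rpow_natCast]
    have hIle : (‖I t‖₊ : ℝ≥0∞) ≤
        ∫⁻ y, (‖Φ ((x+y)/t)‖₊ : ℝ≥0∞) * (‖g y‖₊ : ℝ≥0∞) ∂ν := by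
      calc (‖I t‖₊ : ℝ≥0∞) ≤ ∫⁻ y, (‖Φ ((x+y)/t) * g y‖₊ : ℝ≥0∞) ∂ν :=
            enorm_integral_le_lintegral_enorm _
        _ = ∫⁻ y, (‖Φ ((x+y)/t)‖₊ : ℝ≥0∞) * (‖g y‖₊ : ℝ≥0∞) ∂ν := by
            apply lintegral_congr
            intro y
            rw [nnnorm_mul, ENNReal.coe_mul]
    have hpull : ENNReal.ofReal (t ^ (-(3:ℝ)/2)) *
        (∫⁻ y, (‖Φ ((x+y)/t)‖₊ : ℝ≥0∞) * (‖g y‖₊ : ℝ≥0∞) ∂ν) = ∫⁻ y, g2 t y ∂ν := by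
      rw [← lintegral_const_mul' _ _ ENNReal.ofReal_ne_top]
      apply lintegral_congr
      intro y
      rw [hg2]
      simp only
      rw [ENNReal.ofReal_mul (Real.rpow_nonneg ht0.le _), ofReal_norm, enorm_eq_nnnorm,
        mul_assoc]
    rw [claim2, ← hpull]
    apply ENNReal.rpow_le_rpow _ (by norm_num)
    exact mul_le_mul' le_rfl hIle
  -- assemble with minkowski
  have hmink : (∫⁻ t, (∫⁻ y, g2 t y ∂ν) ^ (2:ℝ) ∂ν) ^ (1/2:ℝ) ≤
      ∫⁻ y, (∫⁻ t, g2 t y ^ (2:ℝ) ∂ν) ^ (1/2:ℝ) ∂ν := by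
    apply minkowski_sq
    apply Measurable.mul (f := fun p : ℝ × ℝ => ENNReal.ofReal (p.1 ^ (-(3:ℝ)/2) * ‖Φ ((x+p.2)/p.1)‖)) (g := fun p : ℝ × ℝ => (‖g p.2‖₊ : ℝ≥0∞))
    · apply ENNReal.measurable_ofReal.comp
      apply Measurable.mul
      · exact measurable_fst.pow_const _
      · have hcont : Continuous fun z : ℝ => ‖Φ z‖ := Φ.continuous.norm
        have hm : Measurable fun p : ℝ × ℝ => (x + p.2)/p.1 :=
          (measurable_const.add measurable_snd).div measurable_fst
        exact hcont.measurable.comp hm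
    · exact (hg.measurable.enorm).comp measurable_snd
  have hyint : ∀ᵐ y ∂ν, (∫⁻ t, g2 t y ^ (2:ℝ) ∂ν) ^ (1/2:ℝ) ≤
      ENNReal.ofReal (Real.sqrt E) * (ENNReal.ofReal (1/(x+y)) * (‖g y‖₊ : ℝ≥0∞)) := by
    filter_upwards [ae_restrict_mem measurableSet_Ioi] with y hy
    have hy0 : (0:ℝ) < y := hy
    have hs : (0:ℝ) < x + y := by linarith
    have e1 : ∀ᵐ t ∂ν, g2 t y ^ (2:ℝ) =
        ENNReal.ofReal ((t ^ (-(3:ℝ)/2) * ‖Φ ((x+y)/t)‖)^2) * ((‖g y‖₊ : ℝ≥0∞)) ^ (2:ℝ) := by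
      filter_upwards [ae_restrict_mem measurableSet_Ioi] with t ht
      have ht0 : (0:ℝ) < t := ht
      rw [hg2]
      simp only
      rw [ENNReal.mul_rpow_of_nonneg _ _ (by norm_num : (0:ℝ) ≤ 2),
        ENNReal.ofReal_rpow_of_nonneg (by positivity) (by norm_num)]
      congr 2
      rw [show (2:ℝ) = ((2:ℕ):ℝ) by norm_num, Real.rpow_natCast]
    calc (∫⁻ t, g2 t y ^ (2:ℝ) ∂ν) ^ (1/2:ℝ)
        = ((∫⁻ t, ENNReal.ofReal ((t ^ (-(3:ℝ)/2) * ‖Φ ((x+y)/t)‖)^2) ∂ν) *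
            ((‖g y‖₊ : ℝ≥0∞)) ^ (2:ℝ)) ^ (1/2:ℝ) := by
          rw [lintegral_congr_ae e1, lintegral_mul_const' _ _
            (ENNReal.rpow_ne_top_of_nonneg (by norm_num) ENNReal.coe_ne_top)]
      _ = (∫⁻ t, ENNReal.ofReal ((t ^ (-(3:ℝ)/2) * ‖Φ ((x+y)/t)‖)^2) ∂ν) ^ (1/2:ℝ) *
            (‖g y‖₊ : ℝ≥0∞) := by
          rw [ENNReal.mul_rpow_of_nonneg _ _ (by norm_num : (0:ℝ) ≤ 1/2),
            ← ENNReal.rpow_mul]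
          norm_num
      _ ≤ (ENNReal.ofReal (E * (1/(x+y))^2)) ^ (1/2:ℝ) * (‖g y‖₊ : ℝ≥0∞) := by
          apply mul_le_mul' _ le_rfl
          apply ENNReal.rpow_le_rpow _ (by norm_num)
          exact hker (x+y) hs
      _ = ENNReal.ofReal (Real.sqrt E) * (ENNReal.ofReal (1/(x+y)) * (‖g y‖₊ : ℝ≥0∞)) := by
          rw [ENNReal.ofReal_rpow_of_nonneg (by positivity) (by norm_num)]
          rw [show ((E * (1/(x+y))^2) ^ (1/2:ℝ)) = Real.sqrt E * (1/(x+y)) from ?_]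
          · rw [ENNReal.ofReal_mul (Real.sqrt_nonneg E), mul_assoc]
          · rw [← Real.sqrt_eq_rpow, Real.sqrt_mul hE.le, Real.sqrt_sq (by positivity)]
  calc (ENNReal.ofReal (∫ t in Set.Ioi (0:ℝ), w t)) ^ (1/2:ℝ)
      ≤ (∫⁻ t, (∫⁻ y, g2 t y ∂ν) ^ (2:ℝ) ∂ν) ^ (1/2:ℝ) := by
        apply ENNReal.rpow_le_rpow _ (by norm_num)
        exact hc.trans (lintegral_mono_ae hd)
    _ ≤ ∫⁻ y, (∫⁻ t, g2 t y ^ (2:ℝ) ∂ν) ^ (1/2:ℝ) ∂ν := hmink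
    _ ≤ ∫⁻ y, ENNReal.ofReal (Real.sqrt E) *
          (ENNReal.ofReal (1/(x+y)) * (‖g y‖₊ : ℝ≥0∞)) ∂ν := lintegral_mono_ae hyint
    _ = ENNReal.ofReal (Real.sqrt E) *
          ∫⁻ y in Set.Ioi (0:ℝ), ENNReal.ofReal (1/(x+y)) * (‖g y‖₊ : ℝ≥0∞) :=
        lintegral_const_mul' _ _ ENNReal.ofReal_ne_top

/-- boundedness of the reflected operator `L¹_Φ` of Section 2.1, scalar case:
for a Schwartz function `Φ`,
`‖x ↦ (∫_0^∞ |(1/t)∫_0^∞ Φ((x+y)/t) f(y) dy|² dt/t)^{1/2}‖_{L^p(0,∞)} ≤ C ‖f‖_{L^p(0,∞)}`. -/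
theorem statement18 (p : ℝ) (hp : 1 < p) (Φ : SchwartzMap ℝ ℂ) :
    ∃ C > (0 : ℝ), ∀ f : ℝ → ℂ,
      MemLp f (ENNReal.ofReal p) (volume.restrict (Set.Ioi 0)) →
      eLpNorm (fun x => Real.sqrt (∫ t in Set.Ioi (0 : ℝ),
            ‖(1 / (t : ℂ)) * ∫ y in Set.Ioi (0 : ℝ), Φ ((x + y) / t) * f y‖ ^ 2 / t))
          (ENNReal.ofReal p) (volume.restrict (Set.Ioi 0)) ≤
        ENNReal.ofReal C *
          eLpNorm f (ENNReal.ofReal p) (volume.restrict (Set.Ioi 0)) := by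
  obtain ⟨E, hE, hker⟩ := kernel_bound Φ
  obtain ⟨Cp, hCp, hschur⟩ := schur_test hp
  have hp0 : (0:ℝ) < p := by linarith
  refine ⟨Real.sqrt E * Cp ^ (1/p) + 1, by positivity, ?_⟩
  intro f hf
  have hsm := hf.aestronglyMeasurable
  set g : ℝ → ℂ := hsm.mk f with hgdef
  have hg : StronglyMeasurable g := hsm.stronglyMeasurable_mk
  have hfg : f =ᵐ[volume.restrict (Set.Ioi (0:ℝ))] g := hsm.ae_eq_mk
  have hLHS : (fun x => Real.sqrt (∫ t in Set.Ioi (0 : ℝ),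
      ‖(1 / (t : ℂ)) * ∫ y in Set.Ioi (0 : ℝ), Φ ((x + y) / t) * f y‖ ^ 2 / t)) =
      (fun x => Real.sqrt (∫ t in Set.Ioi (0 : ℝ),
      ‖(1 / (t : ℂ)) * ∫ y in Set.Ioi (0 : ℝ), Φ ((x + y) / t) * g y‖ ^ 2 / t)) := by
    funext x
    have hinner : ∀ t : ℝ, (∫ y in Set.Ioi (0:ℝ), Φ ((x + y) / t) * f y) =
        ∫ y in Set.Ioi (0:ℝ), Φ ((x + y) / t) * g y := by
      intro t
      apply integral_congr_ae
      filter_upwards [hfg] with y hy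
      rw [hy]
    simp_rw [hinner]
  rw [hLHS, eLpNorm_congr_ae hfg]
  set F : ℝ → ℝ≥0∞ := fun y => (‖g y‖₊ : ℝ≥0∞) with hF
  have hFm : Measurable F := hg.measurable.enorm
  have hFfin : ∀ y, F y ≠ ∞ := fun y => ENNReal.coe_ne_top
  have hq0 : (ENNReal.ofReal p) ≠ 0 := by
    simp only [ne_eq, ENNReal.ofReal_eq_zero, not_le]
    linarith
  have hqt : (ENNReal.ofReal p) ≠ ∞ := ENNReal.ofReal_ne_top
  rw [eLpNorm_eq_lintegral_rpow_enorm_toReal hq0 hqt, eLpNorm_eq_lintegral_rpow_enorm_toReal hq0 hqt,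
    ENNReal.toReal_ofReal hp0.le]
  set ν := volume.restrict (Set.Ioi (0:ℝ)) with hν
  set T : ℝ → ℝ≥0∞ := fun x => ∫⁻ y in Set.Ioi (0:ℝ), ENNReal.ofReal (1/(x+y)) * F y
    with hT
  have hpt : ∀ᵐ x ∂ν, ((‖Real.sqrt (∫ t in Set.Ioi (0:ℝ),
      ‖(1 / (t : ℂ)) * ∫ y in Set.Ioi (0 : ℝ), Φ ((x + y) / t) * g y‖ ^ 2 / t)‖₊ : ℝ≥0∞)) ^ p
      ≤ (ENNReal.ofReal (Real.sqrt E) * T x) ^ p := by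
    filter_upwards [ae_restrict_mem measurableSet_Ioi] with x hx
    apply ENNReal.rpow_le_rpow _ hp0.le
    rw [← enorm_eq_nnnorm, ← ofReal_norm, Real.norm_eq_abs, abs_of_nonneg (Real.sqrt_nonneg _)]
    exact pointwise_bound Φ hE hker g hg hx
  have hconst_ne : ENNReal.ofReal (Real.sqrt E) ^ p ≠ ∞ :=
    ENNReal.rpow_ne_top_of_nonneg hp0.le ENNReal.ofReal_ne_top
  calc (∫⁻ x, ((‖Real.sqrt (∫ t in Set.Ioi (0:ℝ),
        ‖(1 / (t : ℂ)) * ∫ y in Set.Ioi (0 : ℝ), Φ ((x + y) / t) * g y‖ ^ 2 / t)‖₊ : ℝ≥0∞)) ^ p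
          ∂ν) ^ (1/p)
      ≤ (∫⁻ x, (ENNReal.ofReal (Real.sqrt E) * T x) ^ p ∂ν) ^ (1/p) :=
        ENNReal.rpow_le_rpow (lintegral_mono_ae hpt) (by positivity)
    _ = (ENNReal.ofReal (Real.sqrt E) ^ p * ∫⁻ x, (T x) ^ p ∂ν) ^ (1/p) := by
        congr 1
        rw [← lintegral_const_mul' _ _ hconst_ne]
        apply lintegral_congr
        intro x
        rw [ENNReal.mul_rpow_of_nonneg _ _ hp0.le]
    _ ≤ (ENNReal.ofReal (Real.sqrt E) ^ p * (ENNReal.ofReal Cp * ∫⁻ y, F y ^ p ∂ν)) ^ (1/p) := by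
        apply ENNReal.rpow_le_rpow _ (by positivity)
        exact mul_le_mul' le_rfl (hschur F hFm hFfin)
    _ = ENNReal.ofReal (Real.sqrt E) * (ENNReal.ofReal Cp) ^ (1/p) *
          (∫⁻ y, F y ^ p ∂ν) ^ (1/p) := by
        rw [ENNReal.mul_rpow_of_nonneg _ _ (by positivity : (0:ℝ) ≤ 1/p),
          ENNReal.mul_rpow_of_nonneg _ _ (by positivity : (0:ℝ) ≤ 1/p),
          ← ENNReal.rpow_mul, mul_one_div, div_self hp0.ne', ENNReal.rpow_one, mul_assoc]
    _ ≤ ENNReal.ofReal (Real.sqrt E * Cp ^ (1/p) + 1) * (∫⁻ y, F y ^ p ∂ν) ^ (1/p) := by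
        apply mul_le_mul_left
        rw [ENNReal.ofReal_rpow_of_nonneg hCp.le (by positivity),
          ← ENNReal.ofReal_mul (Real.sqrt_nonneg E)]
        apply ENNReal.ofReal_le_ofReal
        linarith
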